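/- A finite poset x with |x| ≥ 2 is a pure matter causet (a product of the 2-element antichain but not of the 2-element chain) if and only if x has at least two minimal vertices and no minimal vertex of x has a single-parent child. -/

import Mathlib

/-- A causet: a finite partial order on a finite set of labels. -/
structure Causet where
  carrier : Finset ℕ
  rel : ℕ → ℕ → Prop
  rel_mem : ∀ a b, rel a b → a ∈ carrier ∧ b ∈ carrier
  irrefl : ∀ a, ¬ rel a a
  trans : ∀ a b c, rel a b → rel b c → rel a c

namespace Causet

/-- A minimal vertex. -/
def Minimal (x : Causet) (a : ℕ) : Prop :=
  a ∈ x.carrier ∧ ∀ b, ¬ x.rel b a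

/-- A maximal vertex. -/
def Maximal (x : Causet) (a : ℕ) : Prop :=
  a ∈ x.carrier ∧ ∀ b, ¬ x.rel a b

/-- `a` is a parent of `b` (a lower cover). -/
def Parent (x : Causet) (a b : ℕ) : Prop :=
  x.rel a b ∧ ∀ c, ¬ (x.rel a c ∧ x.rel c b)

/-- `y` is obtained from `x` by adjoining the single new element `a`, maximal in `y`. -/
def ProducesWith (x y : Causet) (a : ℕ) : Prop :=
  a ∉ x.carrier ∧ y.carrier = insert a x.carrier ∧ y.Maximal a ∧
    ∀ u v, u ∈ x.carrier → v ∈ x.carrier → (y.rel u v ↔ x.rel u v)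

/-- `x → y`: `y` is obtained from `x` by adjoining a single maximal element. -/
def Produces (x y : Causet) : Prop := ∃ a, ProducesWith x y a

/-- `y` is a product of `x`: `y = x` or there is a chain of productions from `x` to `y`. -/
def ProductOf (x y : Causet) : Prop := Relation.ReflTransGen Produces x y

/-- `x` is (a copy of) the 2-element chain. -/
def IsTwoChain (x : Causet) : Prop :=
  ∃ a b, a ≠ b ∧ x.carrier = {a, b} ∧ x.rel a b ∧ ∀ u v, x.rel u v → u = a ∧ v = b

/-- `x` is (a copy of) the 2-element antichain. -/
def IsTwoAntichain (x : Causet) : Prop :=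
  ∃ a b, a ≠ b ∧ x.carrier = {a, b} ∧ ∀ u v, ¬ x.rel u v

/-- `x` has at least two minimal vertices. -/
def TwoMinimal (x : Causet) : Prop :=
  ∃ a b, a ≠ b ∧ x.Minimal a ∧ x.Minimal b

/-- The minimal vertex `a` has a single-parent child (a child whose unique parent is `a`). -/
def MinWithSPC (x : Causet) (a : ℕ) : Prop :=
  x.Minimal a ∧ ∃ c, x.Parent a c ∧ ∀ d, x.Parent d c → d = a

/-- `x` is mixed: at least two minimal vertices, at least one of which has a
single-parent child. -/
def Mixed (x : Causet) : Prop :=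
  TwoMinimal x ∧ ∃ a, MinWithSPC x a

end Causet

section Aux

open Causet

attribute [local instance] Classical.propDecidable

lemma Causet.ext' {z x : Causet} (hc : z.carrier = x.carrier)
    (hr : ∀ u v, z.rel u v ↔ x.rel u v) : z = x := by
  cases z with
  | mk c r hm hi ht =>
    cases x with
    | mk c' r' hm' hi' ht' =>
      simp only at hc hr
      obtain rfl : c = c' := hc
      obtain rfl : r = r' := by
        funext u v; exact propext (hr u v)
      rfl

/-- `z` is a down-closed induced subcauset of `x`. -/
def DSub (z x : Causet) : Prop :=
  z.carrier ⊆ x.carrier ∧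
    (∀ u v, u ∈ z.carrier → v ∈ z.carrier → (z.rel u v ↔ x.rel u v)) ∧
    ∀ u v, u ∈ z.carrier → x.rel v u → v ∈ z.carrier

lemma prodOf_dsub {z x : Causet} (h : z.ProductOf x) : DSub z x := by
  induction h with
  | refl =>
    exact ⟨subset_rfl, fun u v _ _ => Iff.rfl, fun u v _ hr => (z.rel_mem _ _ hr).1⟩
  | tail _ hstep ih =>
    rename_i y w _
    obtain ⟨a, ha, hcar, hmax, hrel⟩ := hstep
    have hsub : y.carrier ⊆ w.carrier := by
      rw [hcar]; exact fun u hu => Finset.mem_insert_of_mem hu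
    refine ⟨ih.1.trans hsub, fun u v hu hv => ?_, fun u v hu hvu => ?_⟩
    · rw [ih.2.1 u v hu hv, hrel u v (ih.1 hu) (ih.1 hv)]
    · have hvmem : v ∈ w.carrier := (w.rel_mem _ _ hvu).1
      rw [hcar] at hvmem
      rcases Finset.mem_insert.mp hvmem with rfl | hv
      · exact absurd hvu (hmax.2 u)
      · exact ih.2.2 u v hu ((hrel v u hv (ih.1 hu)).mp hvu)

lemma causet_exists_min (x : Causet) (s : Finset ℕ) (hs : s.Nonempty) :
    ∃ a ∈ s, ∀ b ∈ s, ¬ x.rel b a := by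
  obtain ⟨a, ha, hmin⟩ :=
    s.exists_min_image (fun a => (s.filter (fun b => x.rel b a)).card) hs
  refine ⟨a, ha, fun b hb hrel => ?_⟩
  have hss : s.filter (fun c => x.rel c b) ⊂ s.filter (fun c => x.rel c a) := by
    rw [Finset.ssubset_iff_of_subset]
    · refine ⟨b, by simp only [Finset.mem_filter]; exact ⟨hb, hrel⟩, ?_⟩
      simp only [Finset.mem_filter, not_and]
      exact fun _ => x.irrefl b
    · intro c hc
      simp only [Finset.mem_filter] at hc ⊢
      exact ⟨hc.1, x.trans _ _ _ hc.2 hrel⟩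
  exact absurd (hmin b hb) (not_le.mpr (Finset.card_lt_card hss))

lemma eq_of_dsub {z x : Causet} (hd : DSub z x) (hxz : x.carrier ⊆ z.carrier) :
    z = x := by
  refine Causet.ext' (le_antisymm hd.1 hxz) fun u v => ?_
  by_cases hu : u ∈ z.carrier
  · by_cases hv : v ∈ z.carrier
    · exact hd.2.1 u v hu hv
    · constructor
      · intro h; exact absurd (z.rel_mem _ _ h).2 hv
      · intro h; exact absurd (hxz (x.rel_mem _ _ h).2) hv
  · constructor
    · intro h; exact absurd (z.rel_mem _ _ h).1 hu
    · intro h; exact absurd (hxz (x.rel_mem _ _ h).1) hu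

lemma dsub_prodOf : ∀ (n : ℕ) (z x : Causet),
    (x.carrier \ z.carrier).card ≤ n → DSub z x → z.ProductOf x := by
  intro n
  induction n with
  | zero =>
    intro z x hcard hd
    have hempty : x.carrier \ z.carrier = ∅ :=
      Finset.card_eq_zero.mp (Nat.le_zero.mp hcard)
    have hxz : x.carrier ⊆ z.carrier := by
      intro u hu
      by_contra h
      have : u ∈ x.carrier \ z.carrier := Finset.mem_sdiff.mpr ⟨hu, h⟩
      simp [hempty] at this
    rw [eq_of_dsub hd hxz]
    exact Relation.ReflTransGen.refl
  | succ n ih =>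
    intro z x hcard hd
    by_cases hxz : x.carrier ⊆ z.carrier
    · rw [eq_of_dsub hd hxz]
      exact Relation.ReflTransGen.refl
    · have hne : (x.carrier \ z.carrier).Nonempty := by
        rw [Finset.sdiff_nonempty]; exact hxz
      obtain ⟨a, ha, hamin⟩ := causet_exists_min x _ hne
      have hax : a ∈ x.carrier := (Finset.mem_sdiff.mp ha).1
      have haz : a ∉ z.carrier := (Finset.mem_sdiff.mp ha).2
      have hbelow : ∀ v, x.rel v a → v ∈ z.carrier := by
        intro v hv
        by_contra h
        exact hamin v (Finset.mem_sdiff.mpr ⟨(x.rel_mem _ _ hv).1, h⟩) hv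
      set S : Finset ℕ := insert a z.carrier with hS
      have hSsub : S ⊆ x.carrier := by
        intro u hu
        rcases Finset.mem_insert.mp hu with rfl | hu
        · exact hax
        · exact hd.1 hu
      let y : Causet :=
        ⟨S, fun u v => x.rel u v ∧ u ∈ S ∧ v ∈ S,
          fun u v h => ⟨h.2.1, h.2.2⟩,
          fun u h => x.irrefl u h.1,
          fun u v w h1 h2 => ⟨x.trans _ _ _ h1.1 h2.1, h1.2.1, h2.2.2⟩⟩
      have hya : ∀ b, ¬ y.rel a b := by
        intro b hb
        rcases Finset.mem_insert.mp hb.2.2 with rfl | hbz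
        · exact x.irrefl b hb.1
        · exact haz (hd.2.2 b a hbz hb.1)
      have hpw : ProducesWith z y a := by
        refine ⟨haz, rfl, ⟨Finset.mem_insert_self a _, hya⟩, fun u v hu hv => ?_⟩
        have : y.rel u v ↔ x.rel u v := by
          simp only [y, hS]
          exact ⟨fun h => h.1, fun h =>
            ⟨h, Finset.mem_insert_of_mem hu, Finset.mem_insert_of_mem hv⟩⟩
        rw [this, hd.2.1 u v hu hv]
      have hdy : DSub y x := by
        refine ⟨hSsub, fun u v hu hv => ?_, fun u v hu hvu => ?_⟩
        · exact ⟨fun h => h.1, fun h => ⟨h, hu, hv⟩⟩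
        · rcases Finset.mem_insert.mp hu with rfl | hu
          · exact Finset.mem_insert_of_mem (hbelow v hvu)
          · exact Finset.mem_insert_of_mem (hd.2.2 u v hu hvu)
      have hcard' : (x.carrier \ y.carrier).card ≤ n := by
        have hsd : x.carrier \ S = (x.carrier \ z.carrier).erase a := by
          ext u
          simp only [Finset.mem_sdiff, Finset.mem_erase, Finset.mem_insert, hS]
          tauto
        have : (x.carrier \ S).card = (x.carrier \ z.carrier).card - 1 := by
          rw [hsd, Finset.card_erase_of_mem ha]
        have hpos : 1 ≤ (x.carrier \ z.carrier).card :=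
          Finset.card_pos.mpr hne
        show (x.carrier \ S).card ≤ n
        omega
      exact Relation.ReflTransGen.head ⟨a, hpw⟩ (ih y x hcard' hdy)

lemma causet_exists_parent (x : Causet) (c : ℕ) :
    ∀ (n : ℕ) (v : ℕ),
      (x.carrier.filter (fun w => x.rel v w ∧ x.rel w c)).card ≤ n →
      x.rel v c → ∃ d, x.Parent d c ∧ (v = d ∨ x.rel v d) := by
  intro n
  induction n with
  | zero =>
    intro v hcard hvc
    refine ⟨v, ⟨hvc, fun w hw => ?_⟩, Or.inl rfl⟩
    have : w ∈ x.carrier.filter (fun w => x.rel v w ∧ x.rel w c) :=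
      Finset.mem_filter.mpr ⟨(x.rel_mem _ _ hw.1).2, hw⟩
    have := Finset.card_pos.mpr ⟨w, this⟩
    omega
  | succ n ih =>
    intro v hcard hvc
    by_cases hp : ∀ w, ¬ (x.rel v w ∧ x.rel w c)
    · exact ⟨v, ⟨hvc, hp⟩, Or.inl rfl⟩
    · push_neg at hp
      obtain ⟨w, hvw, hwc⟩ := hp
      have hss : x.carrier.filter (fun u => x.rel w u ∧ x.rel u c) ⊂
          x.carrier.filter (fun u => x.rel v u ∧ x.rel u c) := by
        rw [Finset.ssubset_iff_of_subset]
        · refine ⟨w, Finset.mem_filter.mpr ⟨(x.rel_mem _ _ hvw).2, hvw, hwc⟩, ?_⟩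
          simp only [Finset.mem_filter, not_and]
          exact fun _ h _ => x.irrefl w h
        · intro u hu
          simp only [Finset.mem_filter] at hu ⊢
          exact ⟨hu.1, x.trans _ _ _ hvw hu.2.1, hu.2.2⟩
      have hlt := Finset.card_lt_card hss
      obtain ⟨d, hd, hcase⟩ := ih w (by omega) hwc
      refine ⟨d, hd, Or.inr ?_⟩
      rcases hcase with rfl | h
      · exact hvw
      · exact x.trans _ _ _ hvw h

end Aux

/-- A finite poset `x` with `|x| ≥ 2` is a pure matter causet (a product
of the 2-element antichain but not of the 2-element chain) iff `x` has at least two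
minimal vertices and no minimal vertex of `x` has a single-parent child. -/
theorem stmt4 (x : Causet) (hx : 2 ≤ x.carrier.card) :
    ((∃ z : Causet, z.IsTwoAntichain ∧ z.ProductOf x) ∧
      ¬ (∃ z : Causet, z.IsTwoChain ∧ z.ProductOf x)) ↔
    (Causet.TwoMinimal x ∧ ∀ a, x.Minimal a → ¬ ∃ c, x.Parent a c ∧ ∀ d, x.Parent d c → d = a) := by
  constructor
  · rintro ⟨⟨z, ⟨a, b, hab, hcar, hanti⟩, hprod⟩, hC⟩
    have hd := prodOf_dsub hprod
    have hmin : ∀ u ∈ z.carrier, x.Minimal u := by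
      intro u hu
      refine ⟨hd.1 hu, fun v hv => ?_⟩
      have hvz := hd.2.2 u v hu hv
      exact hanti v u ((hd.2.1 v u hvz hu).mpr hv)
    constructor
    · exact ⟨a, b, hab, hmin a (by simp [hcar]), hmin b (by simp [hcar])⟩
    · rintro m hmm ⟨c, ⟨hmc, hnomid⟩, huniq⟩
      have hne : m ≠ c := fun h => x.irrefl m (h ▸ hmc)
      have hmx : m ∈ x.carrier := (x.rel_mem _ _ hmc).1
      have hcx : c ∈ x.carrier := (x.rel_mem _ _ hmc).2
      let w : Causet :=
        ⟨{m, c}, fun u v => u = m ∧ v = c,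
          fun u v h => by simp [h.1, h.2],
          fun u h => hne (h.1.symm.trans h.2),
          fun u v t h1 h2 => absurd (h2.1.symm.trans h1.2) hne⟩
      have hwmem : ∀ u, u ∈ w.carrier → u = m ∨ u = c := by
        intro u hu
        have hu' : u ∈ ({m, c} : Finset ℕ) := hu
        simpa using hu'
      have hchain : w.IsTwoChain := ⟨m, c, hne, rfl, ⟨rfl, rfl⟩, fun u v h => h⟩
      have hdw : DSub w x := by
        refine ⟨?_, fun u v hu hv => ?_, fun u v hu hvu => ?_⟩
        · intro u hu
          rcases hwmem u hu with rfl | rfl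
          · exact hmx
          · exact hcx
        · constructor
          · rintro ⟨rfl, rfl⟩; exact hmc
          · intro h
            rcases hwmem u hu with h1 | h1 <;> rcases hwmem v hv with h2 | h2
            · exfalso; rw [h1, h2] at h; exact x.irrefl m h
            · exact ⟨h1, h2⟩
            · exfalso; rw [h1, h2] at h; exact x.irrefl m (x.trans _ _ _ hmc h)
            · exfalso; rw [h1, h2] at h; exact x.irrefl c h
        · rcases hwmem u hu with h1 | h1
          · rw [h1] at hvu; exact absurd hvu (hmm.2 v)
          · rw [h1] at hvu
            obtain ⟨d, hpar, hcase⟩ :=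
              causet_exists_parent x c _ v le_rfl hvu
            have hdm : d = m := huniq d hpar
            rcases hcase with h2 | h2
            · show v ∈ ({m, c} : Finset ℕ)
              rw [h2, hdm]; simp
            · rw [hdm] at h2; exact absurd h2 (hmm.2 v)
      exact hC ⟨w, hchain, dsub_prodOf _ w x le_rfl hdw⟩
  · rintro ⟨⟨a, b, hab, hma, hmb⟩, hspc⟩
    constructor
    · let z : Causet :=
        ⟨{a, b}, fun _ _ => False, fun _ _ h => h.elim, fun _ h => h,
          fun _ _ _ h _ => h⟩
      refine ⟨z, ⟨a, b, hab, rfl, fun _ _ h => h⟩, dsub_prodOf _ z x le_rfl ?_⟩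
      refine ⟨?_, fun u v hu hv => ?_, fun u v hu hvu => ?_⟩
      · intro u hu
        rcases Finset.mem_insert.mp hu with rfl | hu
        · exact hma.1
        · rw [Finset.mem_singleton] at hu; exact hu ▸ hmb.1
      · constructor
        · intro h; exact h.elim
        · intro h
          rcases Finset.mem_insert.mp hv with rfl | hv
          · exact hma.2 u h
          · rw [Finset.mem_singleton] at hv; exact hmb.2 u (hv ▸ h)
      · exfalso
        rcases Finset.mem_insert.mp hu with rfl | hu
        · exact hma.2 v hvu
        · rw [Finset.mem_singleton] at hu; exact hmb.2 v (hu ▸ hvu)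
    · rintro ⟨z, ⟨p, q, hpq, hcar, hrpq, hchain⟩, hprod⟩
      have hd := prodOf_dsub hprod
      have hpz : p ∈ z.carrier := by simp [hcar]
      have hqz : q ∈ z.carrier := by simp [hcar]
      have hpmin : x.Minimal p := by
        refine ⟨hd.1 hpz, fun v hv => ?_⟩
        have hvz := hd.2.2 p v hpz hv
        have := hchain v p ((hd.2.1 v p hvz hpz).mpr hv)
        exact hpq (this.2.symm ▸ rfl)
      have hxpq : x.rel p q := (hd.2.1 p q hpz hqz).mp hrpq
      have hmemz : ∀ u ∈ z.carrier, u = p ∨ u = q := by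
        intro u hu
        rw [hcar] at hu
        rcases Finset.mem_insert.mp hu with rfl | hu
        · exact Or.inl rfl
        · rw [Finset.mem_singleton] at hu; exact Or.inr hu
      have hpar : x.Parent p q := by
        refine ⟨hxpq, fun e he => ?_⟩
        have hez := hd.2.2 q e hqz he.2
        rcases hmemz e hez with rfl | rfl
        · exact x.irrefl e he.1
        · exact x.irrefl e he.2
      refine hspc p hpmin ⟨q, hpar, fun d hdq => ?_⟩
      have hdz := hd.2.2 q d hqz hdq.1
      rcases hmemz d hdz with rfl | rfl
      · rfl
      · exact absurd hdq.1 (x.irrefl d)
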